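/- Let G be a GFP sequence of Fibonacci type with gcd(d, g) a unit, and let n = 2k₁ and m = 2k₂ with k₁, k₂ ≥ 1. Then gcd(b₁, b₂, b₃) is associated to d · gcd(d, k₁, k₂) and gcd(a₁, a₂, a₃) is associated to d · gcd(d, k₁−1, k₂+1), where the integers k₁, k₂, k₁−1, k₂+1 are regarded as constant polynomials in ℤ[x]. In particular gcd(a₁, a₂, a₃) = β · gcd(b₁, b₂, b₃) with β = gcd(d, k₁−1, k₂+1)/gcd(d, k₁, k₂). -/

import Mathlib

open Polynomial

set_option linter.unusedSectionVars false
set_option linter.unusedVariables false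
set_option maxHeartbeats 800000

section
variable {R : Type*} [CommRing R] [IsDomain R] [NormalizedGCDMonoid R]

variable {R : Type*} [CommRing R] [IsDomain R] [NormalizedGCDMonoid R]

theorem aux_gcd_congr {a b c : R} (h : Associated a b) : Associated (gcd a c) (gcd b c) :=
  associated_of_dvd_dvd
    (dvd_gcd ((gcd_dvd_left a c).trans h.dvd) (gcd_dvd_right a c))
    (dvd_gcd ((gcd_dvd_left b c).trans h.symm.dvd) (gcd_dvd_right b c))

theorem aux_strip {a b c : R} (h : IsRelPrime b c) : Associated (gcd (a*b) c) (gcd a c) := by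
  apply associated_of_dvd_dvd
  · refine dvd_gcd ?_ (gcd_dvd_right _ _)
    have h1 : IsRelPrime (gcd (a*b) c) b := h.symm.of_dvd_left (gcd_dvd_right (a*b) c)
    exact h1.dvd_of_dvd_mul_right (gcd_dvd_left _ _)
  · exact dvd_gcd ((gcd_dvd_left a c).trans (dvd_mul_right a b)) (gcd_dvd_right a c)

theorem aux_split {A B C D : R} (hBC : IsRelPrime B C) (hAD : IsRelPrime A D) :
    Associated (gcd (A*B) (C*D)) (gcd A C * gcd B D) := by
  apply associated_of_dvd_dvd
  · have h1 : gcd (A*B) (C*D) ∣ gcd (A*B) C * gcd (A*B) D := gcd_mul_dvd_mul_gcd _ _ _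
    have h2 : Associated (gcd (A*B) C) (gcd A C) := aux_strip hBC
    have h3 : Associated (gcd (A*B) D) (gcd B D) := by
      rw [mul_comm A B]; exact aux_strip hAD
    exact h1.trans (mul_dvd_mul h2.dvd h3.dvd)
  · exact dvd_gcd (mul_dvd_mul (gcd_dvd_left A C) (gcd_dvd_left B D))
      (mul_dvd_mul (gcd_dvd_right A C) (gcd_dvd_right B D))

def useq (g : R) (G : ℕ → R) : ℕ → R
  | 0 => 0
  | k+1 => G (2*k+1) + g * useq g G k

variable (d g : R) (G : ℕ → R)

theorem hrec' (hrec : ∀ n : ℕ, 2 ≤ n → G n = d * G (n - 1) + g * G (n - 2)) :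
    ∀ n : ℕ, G (n+2) = d * G (n+1) + g * G n := by
  intro n
  have := hrec (n+2) (by omega)
  simpa using this

theorem hG2 (h0 : G 0 = 0) (h1 : G 1 = 1)
    (hrec : ∀ n : ℕ, 2 ≤ n → G n = d * G (n - 1) + g * G (n - 2)) : G 2 = d := by
  have := hrec' d g G hrec 0
  rw [h0, h1] at this
  simpa using this

theorem Gmodg (h1 : G 1 = 1)
    (hrec : ∀ n : ℕ, 2 ≤ n → G n = d * G (n - 1) + g * G (n - 2)) :
    ∀ n, ∃ t, G (n+1) = d^n + g*t := by
  intro n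
  induction n with
  | zero => exact ⟨0, by simp [h1]⟩
  | succ n ih =>
    obtain ⟨t, ht⟩ := ih
    exact ⟨d*t + G n, by rw [hrec' d g G hrec n, ht]; ring⟩

theorem rp_g (h1 : G 1 = 1)
    (hrec : ∀ n : ℕ, 2 ≤ n → G n = d * G (n - 1) + g * G (n - 2))
    (hdg : IsUnit (gcd d g)) :
    ∀ n, IsRelPrime (G (n+1)) g := by
  have hrp : IsRelPrime d g := fun q hq1 hq2 => isUnit_of_dvd_unit (dvd_gcd hq1 hq2) hdg
  intro n q hq1 hq2
  obtain ⟨t, ht⟩ := Gmodg d g G h1 hrec n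
  have hdn : q ∣ d^n := by
    have : d^n = G (n+1) - g*t := by rw [ht]; ring
    rw [this]
    exact dvd_sub hq1 (hq2.mul_right t)
  exact (hrp.pow_left) hdn hq2

theorem Gadd (h0 : G 0 = 0) (h1 : G 1 = 1)
    (hrec : ∀ n : ℕ, 2 ≤ n → G n = d * G (n - 1) + g * G (n - 2)) :
    ∀ m n, G (m + n + 1) = G (m+1) * G (n+1) + g * G m * G n := by
  intro m
  induction m using Nat.twoStepInduction with
  | zero => intro n; simp [h0, h1]
  | one =>
    intro n
    rw [show 1 + n + 1 = n + 2 from by omega, hrec' d g G hrec n,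
      show (1:ℕ) + 1 = 2 from rfl, hG2 d g G h0 h1 hrec, h1]
    ring
  | more m ih1 ih2 =>
    intro n
    have key : G (m + 2 + n + 1) = d * G (m + 1 + n + 1) + g * G (m + n + 1) := by
      rw [show m + 2 + n + 1 = (m + n + 1) + 2 from by omega, hrec' d g G hrec (m+n+1),
        show m + n + 1 + 1 = m + 1 + n + 1 from by omega]
    rw [key, ih2 n, ih1 n,
      show m + 2 + 1 = m + 1 + 2 from by omega, hrec' d g G hrec (m+1),
      hrec' d g G hrec m]
    ring

theorem rp_succ (h0 : G 0 = 0) (h1 : G 1 = 1)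
    (hrec : ∀ n : ℕ, 2 ≤ n → G n = d * G (n - 1) + g * G (n - 2))
    (hdg : IsUnit (gcd d g)) :
    ∀ n, IsRelPrime (G n) (G (n+1)) := by
  intro n
  induction n with
  | zero => rw [h0, h1]; exact fun q _ hq => isUnit_of_dvd_one hq
  | succ n ih =>
    intro q hq1 hq2
    have h3 : q ∣ g * G n := by
      have : g * G n = G (n+2) - d * G (n+1) := by rw [hrec' d g G hrec n]; ring
      rw [this]
      exact dvd_sub hq2 (hq1.mul_left d)
    have hqg : IsRelPrime q g := (rp_g d g G h1 hrec hdg n).of_dvd_left hq1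
    exact ih (hqg.dvd_of_dvd_mul_left h3) hq1
theorem greduce (h0 : G 0 = 0) (h1 : G 1 = 1)
    (hrec : ∀ n : ℕ, 2 ≤ n → G n = d * G (n - 1) + g * G (n - 2))
    (hdg : IsUnit (gcd d g)) :
    ∀ m n, Associated (gcd (G (m + (n+1))) (G (n+1))) (gcd (G m) (G (n+1))) := by
  intro m n
  have hadd : G (m + (n+1)) = G (m+1) * G (n+1) + g * G m * G n := by
    rw [show m + (n+1) = m + n + 1 from by omega]
    exact Gadd d g G h0 h1 hrec m n
  apply associated_of_dvd_dvd
  · refine dvd_gcd ?_ (gcd_dvd_right _ _)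
    set q := gcd (G (m + (n+1))) (G (n+1)) with hq
    have h₁ : q ∣ g * G m * G n := by
      have : g * G m * G n = G (m + (n+1)) - G (m+1) * G (n+1) := by rw [hadd]; ring
      rw [this]
      exact dvd_sub (gcd_dvd_left _ _) ((gcd_dvd_right _ _).mul_left (G (m+1)))
    have rp1 : IsRelPrime q g := (rp_g d g G h1 hrec hdg n).of_dvd_left (gcd_dvd_right _ _)
    have rp2 : IsRelPrime q (G n) :=
      ((rp_succ d g G h0 h1 hrec hdg n).symm).of_dvd_left (gcd_dvd_right _ _)
    have h₂ : q ∣ g * G m := rp2.dvd_of_dvd_mul_right h₁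
    exact rp1.dvd_of_dvd_mul_left h₂
  · refine dvd_gcd ?_ (gcd_dvd_right _ _)
    rw [hadd]
    exact dvd_add ((gcd_dvd_right _ _).mul_left (G (m+1)))
      (((gcd_dvd_left _ _).mul_left g).mul_right (G n))

theorem gmul (h0 : G 0 = 0) (h1 : G 1 = 1)
    (hrec : ∀ n : ℕ, 2 ≤ n → G n = d * G (n - 1) + g * G (n - 2))
    (hdg : IsUnit (gcd d g)) :
    ∀ q r n, Associated (gcd (G ((n+1)*q + r)) (G (n+1))) (gcd (G r) (G (n+1))) := by
  intro q
  induction q with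
  | zero => intro r n; rw [show (n+1)*0 + r = r from by omega]
  | succ q ih =>
    intro r n
    have e : (n+1)*(q+1) + r = ((n+1)*q + r) + (n+1) := by ring
    rw [e]
    exact (greduce d g G h0 h1 hrec hdg ((n+1)*q + r) n).trans (ih r n)

theorem SD (h0 : G 0 = 0) (h1 : G 1 = 1)
    (hrec : ∀ n : ℕ, 2 ≤ n → G n = d * G (n - 1) + g * G (n - 2))
    (hdg : IsUnit (gcd d g)) :
    ∀ m n, Associated (gcd (G m) (G n)) (G (Nat.gcd m n)) := by
  intro m
  induction m using Nat.strong_induction_on with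
  | _ m ih =>
    match m with
    | 0 =>
      intro n
      rw [h0, gcd_zero_left, Nat.gcd_zero_left]
      exact normalize_associated _
    | Nat.succ m =>
      intro n
      have e : (m+1) * (n / (m+1)) + n % (m+1) = n := Nat.div_add_mod n (m+1)
      have s1 : gcd (G (m+1)) (G n) = gcd (G ((m+1) * (n / (m+1)) + n % (m+1))) (G (m+1)) := by
        rw [e, gcd_comm]
      have s2 : Associated (gcd (G ((m+1) * (n / (m+1)) + n % (m+1))) (G (m+1)))
          (gcd (G (n % (m+1))) (G (m+1))) := gmul d g G h0 h1 hrec hdg _ _ _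
      have s3 : Associated (gcd (G (n % (m+1))) (G (m+1)))
          (G (Nat.gcd (n % (m+1)) (m+1))) := ih (n % (m+1)) (Nat.mod_lt n (Nat.succ_pos m)) (m+1)
      rw [s1, Nat.gcd_rec (m+1) n]
      exact s2.trans s3

theorem Gdvd (h0 : G 0 = 0) (h1 : G 1 = 1)
    (hrec : ∀ n : ℕ, 2 ≤ n → G n = d * G (n - 1) + g * G (n - 2))
    (hdg : IsUnit (gcd d g)) :
    ∀ a b, a ∣ b → G a ∣ G b := by
  intro a b hab
  have h := SD d g G h0 h1 hrec hdg a b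
  rw [Nat.gcd_eq_left hab] at h
  exact h.symm.dvd.trans (gcd_dvd_right _ _)

theorem hu (h0 : G 0 = 0)
    (hrec : ∀ n : ℕ, 2 ≤ n → G n = d * G (n - 1) + g * G (n - 2)) :
    ∀ k, G (2*k) = d * useq g G k := by
  intro k
  induction k with
  | zero => simp [useq, h0]
  | succ k ih =>
    show G (2*(k+1)) = d * (G (2*k+1) + g * useq g G k)
    rw [show 2*(k+1) = 2*k+2 from by ring, hrec' d g G hrec (2*k), ih]
    ring

theorem udvd (h0 : G 0 = 0)
    (hrec : ∀ n : ℕ, 2 ≤ n → G n = d * G (n - 1) + g * G (n - 2)) :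
    ∀ k, useq g G k ∣ G (2*k) :=
  fun k => ⟨d, by rw [hu d g G h0 hrec k]; ring⟩

theorem Godd (h1 : G 1 = 1)
    (hrec : ∀ n : ℕ, 2 ≤ n → G n = d * G (n - 1) + g * G (n - 2)) :
    ∀ k, ∃ t, G (2*k+1) = g^k + d*t := by
  intro k
  induction k with
  | zero => exact ⟨0, by simp [h1]⟩
  | succ k ih =>
    obtain ⟨t, ht⟩ := ih
    refine ⟨g*t + G (2*k+2), ?_⟩
    rw [show 2*(k+1)+1 = (2*k+1)+2 from by ring, hrec' d g G hrec (2*k+1),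
      show 2*k+1+1 = 2*k+2 from by ring, ht]
    ring

theorem humod (h0 : G 0 = 0) (h1 : G 1 = 1)
    (hrec : ∀ n : ℕ, 2 ≤ n → G n = d * G (n - 1) + g * G (n - 2)) :
    ∀ k, ∃ s, useq g G (k+1) = ((k+1 : ℕ) : R) * g^k + d*s := by
  intro k
  induction k with
  | zero => exact ⟨0, by simp [useq, h1]⟩
  | succ k ih =>
    obtain ⟨s, hs⟩ := ih
    obtain ⟨t, ht⟩ := Godd d g G h1 hrec (k+1)
    refine ⟨t + g*s, ?_⟩
    show G (2*(k+1)+1) + g * useq g G (k+1) = _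
    rw [ht, hs]
    push_cast
    ring

theorem rp_uu (hd : d ≠ 0) (h0 : G 0 = 0) (h1 : G 1 = 1)
    (hrec : ∀ n : ℕ, 2 ≤ n → G n = d * G (n - 1) + g * G (n - 2))
    (hdg : IsUnit (gcd d g)) :
    ∀ k, IsRelPrime (useq g G k) (useq g G (k+1)) := by
  intro k q hq1 hq2
  have hgcd2 : Nat.gcd (2*k) (2*(k+1)) = 2 := by
    rw [Nat.gcd_mul_left]
    have : Nat.gcd k (k+1) = 1 := by rw [Nat.gcd_self_add_right, Nat.gcd_one_right]
    omega
  have hassoc : Associated (gcd (G (2*k)) (G (2*(k+1)))) d := by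
    have h := SD d g G h0 h1 hrec hdg (2*k) (2*(k+1))
    rw [hgcd2, hG2 d g G h0 h1 hrec] at h
    exact h
  have hdq : d * q ∣ d := by
    have h1' : d * q ∣ d * gcd (useq g G k) (useq g G (k+1)) :=
      mul_dvd_mul_left d (dvd_gcd hq1 hq2)
    have h2' : Associated (d * gcd (useq g G k) (useq g G (k+1)))
        (gcd (G (2*k)) (G (2*(k+1)))) := by
      rw [hu d g G h0 hrec k, hu d g G h0 hrec (k+1)]
      exact (gcd_mul_left' d _ _).symm
    exact h1'.trans (h2'.trans hassoc).dvd
  have : q ∣ 1 := by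
    rcases hdq with ⟨c, hc⟩
    refine ⟨c, mul_left_cancel₀ hd ?_⟩
    rw [← mul_assoc, ← hc, mul_one]
  exact isUnit_of_dvd_one this
theorem aux_strip' {a b c : R} (h : IsRelPrime b c) : Associated (gcd c (a*b)) (gcd c a) := by
  rw [gcd_comm c (a*b), gcd_comm c a]; exact aux_strip h

theorem central (hd : d ≠ 0) (h0 : G 0 = 0) (h1 : G 1 = 1)
    (hrec : ∀ n : ℕ, 2 ≤ n → G n = d * G (n - 1) + g * G (n - 2))
    (hdg : IsUnit (gcd d g)) (x z : ℕ) :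
    Associated
      (gcd (gcd (G (2*x) * G (2*z+1)) (G (2*x+2) * G (2*z))) (G (2*x+1) * G (2*z+2)))
      (d * gcd (gcd d ((z+1 : ℕ) : R)) ((x : ℕ) : R)) := by
  have hrp : IsRelPrime d g := fun q hq1 hq2 => isUnit_of_dvd_unit (dvd_gcd hq1 hq2) hdg
  set u : ℕ → R := useq g G with hu_def
  set o : ℕ := Nat.gcd (2*z+1) (2*x+1) with ho_def
  set W : R := gcd (u x) (u (z+1)) * G o with hW_def
  set V : R := (d * u z) * u (x+1) with hV_def
  have hUx : G (2*x) = d * u x := hu d g G h0 hrec x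
  have hUx1 : G (2*x+2) = d * u (x+1) := by
    rw [show 2*x+2 = 2*(x+1) from by ring]; exact hu d g G h0 hrec (x+1)
  have hUz : G (2*z) = d * u z := hu d g G h0 hrec z
  have hUz1 : G (2*z+2) = d * u (z+1) := by
    rw [show 2*z+2 = 2*(z+1) from by ring]; exact hu d g G h0 hrec (z+1)
  have hdvd_ux : u x ∣ G (2*x) := udvd d g G h0 hrec x
  have hdvd_uz : u z ∣ G (2*z) := udvd d g G h0 hrec z
  have hdvd_ux1 : u (x+1) ∣ G (2*x+1+1) := by
    rw [show 2*x+1+1 = 2*(x+1) from by ring]; exact udvd d g G h0 hrec (x+1)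
  have hdvd_uz1 : u (z+1) ∣ G (2*z+1+1) := by
    rw [show 2*z+1+1 = 2*(z+1) from by ring]; exact udvd d g G h0 hrec (z+1)
  have hGo_x : G o ∣ G (2*x+1) :=
    Gdvd d g G h0 h1 hrec hdg o (2*x+1) (Nat.gcd_dvd_right _ _)
  have hGo_z : G o ∣ G (2*z+1) :=
    Gdvd d g G h0 h1 hrec hdg o (2*z+1) (Nat.gcd_dvd_left _ _)
  -- Step A
  have stepA : Associated (gcd (G (2*x) * G (2*z+1)) (G (2*x+1) * G (2*z+2))) (d * W) := by
    have e1 : G (2*x) * G (2*z+1) = d * (u x * G (2*z+1)) := by rw [hUx]; ring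
    have e2 : G (2*x+1) * G (2*z+2) = d * (u (z+1) * G (2*x+1)) := by rw [hUz1]; ring
    rw [e1, e2]
    have hsplit : Associated (gcd (u x * G (2*z+1)) (u (z+1) * G (2*x+1)))
        (gcd (u x) (u (z+1)) * gcd (G (2*z+1)) (G (2*x+1))) := by
      apply aux_split
      · exact (rp_succ d g G h0 h1 hrec hdg (2*z+1)).of_dvd_right hdvd_uz1
      · exact (rp_succ d g G h0 h1 hrec hdg (2*x)).of_dvd_left hdvd_ux
    have hSDo : Associated (gcd (G (2*z+1)) (G (2*x+1))) (G o) :=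
      SD d g G h0 h1 hrec hdg (2*z+1) (2*x+1)
    exact (gcd_mul_left' d _ _).trans
      (Associated.mul_left d (hsplit.trans (Associated.mul_left _ hSDo)))
  -- reshuffle
  have hshuffle : gcd (gcd (G (2*x) * G (2*z+1)) (G (2*x+2) * G (2*z))) (G (2*x+1) * G (2*z+2))
      = gcd (gcd (G (2*x) * G (2*z+1)) (G (2*x+1) * G (2*z+2))) (G (2*x+2) * G (2*z)) := by
    rw [gcd_assoc, gcd_assoc, gcd_comm (G (2*x+2) * G (2*z))]
  have hT2 : G (2*x+2) * G (2*z) = d * V := by rw [hUx1, hUz, hV_def]; ring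
  -- relprime side conditions
  have rp_x1_W : IsRelPrime (u (x+1)) W := by
    have r1 : IsRelPrime (u (x+1)) (gcd (u x) (u (z+1))) :=
      ((rp_uu d g G hd h0 h1 hrec hdg x).symm).of_dvd_right (gcd_dvd_left _ _)
    have r2 : IsRelPrime (u (x+1)) (G o) :=
      (((rp_succ d g G h0 h1 hrec hdg (2*x+1)).symm).of_dvd_left hdvd_ux1).of_dvd_right hGo_x
    exact r1.mul_right r2
  have rp_z_W : IsRelPrime (u z) W := by
    have r1 : IsRelPrime (u z) (gcd (u x) (u (z+1))) :=
      (rp_uu d g G hd h0 h1 hrec hdg z).of_dvd_right (gcd_dvd_right _ _)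
    have r2 : IsRelPrime (u z) (G o) :=
      ((rp_succ d g G h0 h1 hrec hdg (2*z)).of_dvd_left hdvd_uz).of_dvd_right hGo_z
    exact r1.mul_right r2
  have rp_Go_d : IsRelPrime (G o) d := by
    have hodd : ∃ m, o = 2*m+1 := by
      have h2 : o ∣ 2*z+1 := Nat.gcd_dvd_left _ _
      rcases Nat.even_or_odd o with he | ho
      · exfalso
        obtain ⟨m, hm⟩ := he
        have h4 : (2:ℕ) ∣ 2*z+1 := dvd_trans ⟨m, by omega⟩ h2
        omega
      · obtain ⟨m, hm⟩ := ho; exact ⟨m, by omega⟩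
    obtain ⟨m, hm⟩ := hodd
    obtain ⟨t, ht⟩ := Godd d g G h1 hrec m
    intro q hq1 hq2
    have hqg : q ∣ g^m := by
      have : g^m = G o - d*t := by rw [hm, ht]; ring
      rw [this]
      exact dvd_sub hq1 (hq2.mul_right t)
    exact (hrp.pow_right) hq2 hqg
  -- final gcd identification
  have final : Associated (gcd (gcd (u x) (u (z+1))) d)
      (gcd (gcd d ((z+1 : ℕ) : R)) ((x : ℕ) : R)) := by
    apply associated_of_dvd_dvd
    · set q := gcd (gcd (u x) (u (z+1))) d with hq_def
      have hqd : q ∣ d := gcd_dvd_right _ _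
      have hqux : q ∣ u x := (gcd_dvd_left _ _).trans (gcd_dvd_left _ _)
      have hquz1 : q ∣ u (z+1) := (gcd_dvd_left _ _).trans (gcd_dvd_right _ _)
      have hrpq : ∀ n : ℕ, IsRelPrime q (g^n) := fun n =>
        (hrp.pow_right).of_dvd_left hqd
      have hqz : q ∣ ((z+1 : ℕ) : R) := by
        obtain ⟨s, hs⟩ := humod d g G h0 h1 hrec z
        rw [← hu_def] at hs
        have h3 : q ∣ ((z+1 : ℕ) : R) * g^z := by
          have : ((z+1 : ℕ) : R) * g^z = u (z+1) - d*s := by rw [hs]; ring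
          rw [this]
          exact dvd_sub hquz1 (hqd.mul_right s)
        exact (hrpq z).dvd_of_dvd_mul_right h3
      have hqx : q ∣ ((x : ℕ) : R) := by
        match x, hqux with
        | 0, _ => simp
        | (w+1), hqux => ?_
        obtain ⟨s, hs⟩ := humod d g G h0 h1 hrec w
        rw [← hu_def] at hs
        have h3 : q ∣ ((w+1 : ℕ) : R) * g^w := by
          have : ((w+1 : ℕ) : R) * g^w = u (w+1) - d*s := by rw [hs]; ring
          rw [this]
          exact dvd_sub hqux (hqd.mul_right s)
        exact (hrpq w).dvd_of_dvd_mul_right h3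
      exact dvd_gcd (dvd_gcd hqd hqz) hqx
    · set p := gcd (gcd d ((z+1 : ℕ) : R)) ((x : ℕ) : R) with hp_def
      have hpd : p ∣ d := (gcd_dvd_left _ _).trans (gcd_dvd_left _ _)
      have hpz : p ∣ ((z+1 : ℕ) : R) := (gcd_dvd_left _ _).trans (gcd_dvd_right _ _)
      have hpx : p ∣ ((x : ℕ) : R) := gcd_dvd_right _ _
      have hpuz1 : p ∣ u (z+1) := by
        obtain ⟨s, hs⟩ := humod d g G h0 h1 hrec z
        rw [← hu_def] at hs
        rw [hs]
        exact dvd_add (hpz.mul_right _) (hpd.mul_right s)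
      have hpux : p ∣ u x := by
        match x, hpx with
        | 0, _ => exact dvd_zero p
        | (w+1), hpx => ?_
        obtain ⟨s, hs⟩ := humod d g G h0 h1 hrec w
        rw [← hu_def] at hs
        rw [hs]
        exact dvd_add (hpx.mul_right _) (hpd.mul_right s)
      exact dvd_gcd (dvd_gcd hpux hpuz1) hpd
  -- assemble
  rw [hshuffle, hT2]
  have A1 : Associated (gcd (gcd (G (2*x) * G (2*z+1)) (G (2*x+1) * G (2*z+2))) (d * V))
      (gcd (d * W) (d * V)) := aux_gcd_congr stepA
  have A2 : Associated (gcd (d * W) (d * V)) (d * gcd W V) := gcd_mul_left' d W V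
  have B : Associated (gcd W V) (gcd (gcd d ((z+1 : ℕ) : R)) ((x : ℕ) : R)) := by
    have A4 : Associated (gcd W V) (gcd W (d * u z)) := aux_strip' rp_x1_W
    have A5 : Associated (gcd W (d * u z)) (gcd W d) := aux_strip' rp_z_W
    have A6 : Associated (gcd W d) (gcd (gcd (u x) (u (z+1))) d) := aux_strip rp_Go_d
    exact A4.trans (A5.trans (A6.trans final))
  refine A1.trans ?_
  exact A2.trans (Associated.mul_left d B)
end

theorem star_of_david_fib_type_both_even (d g : Polynomial ℤ) (hd : d ≠ 0) (hg : g ≠ 0)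
    (G : ℕ → Polynomial ℤ) (h0 : G 0 = 0) (h1 : G 1 = 1)
    (hrec : ∀ n : ℕ, 2 ≤ n → G n = d * G (n - 1) + g * G (n - 2))
    (hdg : IsUnit (gcd d g))
    (k₁ k₂ : ℕ) (hk₁ : 1 ≤ k₁) (hk₂ : 1 ≤ k₂) :
    Associated
      (gcd (gcd (G (2 * k₂) * G (2 * k₁ - 1)) (G (2 * k₂ + 2) * G (2 * k₁ - 2)))
        (G (2 * k₂ + 1) * G (2 * k₁)))
      (d * gcd (gcd d (k₁ : Polynomial ℤ)) (k₂ : Polynomial ℤ)) ∧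
    Associated
      (gcd (gcd (G (2 * k₂ + 1) * G (2 * k₁ - 2)) (G (2 * k₂) * G (2 * k₁)))
        (G (2 * k₂ + 2) * G (2 * k₁ - 1)))
      (d * gcd (gcd d ((k₁ - 1 : ℕ) : Polynomial ℤ)) ((k₂ + 1 : ℕ) : Polynomial ℤ)) ∧
    Associated
      (gcd (gcd d (k₁ : Polynomial ℤ)) (k₂ : Polynomial ℤ) *
        gcd (gcd (G (2 * k₂ + 1) * G (2 * k₁ - 2)) (G (2 * k₂) * G (2 * k₁)))
          (G (2 * k₂ + 2) * G (2 * k₁ - 1)))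
      (gcd (gcd d ((k₁ - 1 : ℕ) : Polynomial ℤ)) ((k₂ + 1 : ℕ) : Polynomial ℤ) *
        gcd (gcd (G (2 * k₂) * G (2 * k₁ - 1)) (G (2 * k₂ + 2) * G (2 * k₁ - 2)))
          (G (2 * k₂ + 1) * G (2 * k₁))) := by
  have Hb := central d g G hd h0 h1 hrec hdg k₂ (k₁ - 1)
  rw [show 2*(k₁-1)+2 = 2*k₁ from by omega, show 2*(k₁-1)+1 = 2*k₁ - 1 from by omega,
      show 2*(k₁-1) = 2*k₁ - 2 from by omega, show k₁ - 1 + 1 = k₁ from by omega] at Hb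
  have Ha := central d g G hd h0 h1 hrec hdg (k₁ - 1) k₂
  rw [show 2*(k₁-1)+2 = 2*k₁ from by omega, show 2*(k₁-1)+1 = 2*k₁ - 1 from by omega,
      show 2*(k₁-1) = 2*k₁ - 2 from by omega] at Ha
  rw [mul_comm (G (2*k₁ - 2)) (G (2*k₂+1)), mul_comm (G (2*k₁)) (G (2*k₂)),
      mul_comm (G (2*k₁ - 1)) (G (2*k₂+2))] at Ha
  rw [gcd_assoc d (((k₂+1 : ℕ)) : Polynomial ℤ) (((k₁-1 : ℕ)) : Polynomial ℤ),
      gcd_comm (((k₂+1 : ℕ)) : Polynomial ℤ) (((k₁-1 : ℕ)) : Polynomial ℤ),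
      ← gcd_assoc d (((k₁-1 : ℕ)) : Polynomial ℤ) (((k₂+1 : ℕ)) : Polynomial ℤ)] at Ha
  refine ⟨Hb, Ha, ?_⟩
  have h3 : gcd (gcd d (k₁ : Polynomial ℤ)) (k₂ : Polynomial ℤ) *
      (d * gcd (gcd d ((k₁-1 : ℕ) : Polynomial ℤ)) ((k₂+1 : ℕ) : Polynomial ℤ)) =
      gcd (gcd d ((k₁-1 : ℕ) : Polynomial ℤ)) ((k₂+1 : ℕ) : Polynomial ℤ) *
      (d * gcd (gcd d (k₁ : Polynomial ℤ)) (k₂ : Polynomial ℤ)) := by ring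
  have h4 := (Associated.mul_left
      (gcd (gcd d ((k₁-1 : ℕ) : Polynomial ℤ)) ((k₂+1 : ℕ) : Polynomial ℤ)) Hb).symm
  rw [← h3] at h4
  exact (Associated.mul_left _ Ha).trans h4
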